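/- Let 0<p_i<∞ and φ_i∈𝒢_{p_i}(𝔻) with φ_i(1)=1, sup_k φ_i(2^k)=∞, i=1,2, and suppose lim_{ν→∞} 2^{−νd/p_i}φ_i(2^ν)=0 for i=1,2, with the embedding m_{φ₁,p₁}(ℤ^d) ↪ m_{φ₂,p₂}(ℤ^d) continuous. Then both spaces contain a common subspace on which the two norms coincide with the ℓ_∞ norm of an ℓ_∞(ℕ) sequence (an isometric copy of ℓ_∞(ℕ)); consequently the embedding is not strictly singular. -/

import Mathlib

open ENNReal Filter

noncomputable section

/-- `Q_{0,k} ⊂ Q_{-j,m}` for dyadic cubes `Q_{-j,m} = 2^j([0,1)^d + m)`. -/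
def inCube (d j : ℕ) (m k : Fin d → ℤ) : Prop :=
  ∀ i, 2 ^ j * m i ≤ k i ∧ k i < 2 ^ j * (m i + 1)

/-- the local quantity `(Σ_{k : Q_{0,k} ⊂ Q_{-j,m}} |λ_k|^p)^{1/p}`, in `ℝ≥0∞`. -/
def localSum (d : ℕ) (p : ℝ) (j : ℕ) (m : Fin d → ℤ)
    (lam : (Fin d → ℤ) → ℂ) : ℝ≥0∞ :=
  (∑' k : {k : Fin d → ℤ // inCube d j m k}, ENNReal.ofReal ‖lam k.1‖ ^ p) ^ (1 / p)

/-- quasi-norm of the generalised Morrey sequence space `m_{φ,p}(ℤ^d)`;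
`φ j` stands for `φ(2^j)`. -/
def mNorm (d : ℕ) (p : ℝ) (φ : ℕ → ℝ) (lam : (Fin d → ℤ) → ℂ) : ℝ≥0∞ :=
  ⨆ (j : ℕ) (m : Fin d → ℤ),
    ENNReal.ofReal (φ j) * (2 : ℝ≥0∞) ^ (-((j : ℝ) * d) / p) * localSum d p j m lam

def ellpNorm (d : ℕ) (p : ℝ) (lam : (Fin d → ℤ) → ℂ) : ℝ≥0∞ :=
  (∑' k : Fin d → ℤ, ENNReal.ofReal ‖lam k‖ ^ p) ^ (1 / p)

def linftyNorm (d : ℕ) (lam : (Fin d → ℤ) → ℂ) : ℝ≥0∞ :=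
  ⨆ k : Fin d → ℤ, ENNReal.ofReal ‖lam k‖

/-- the class `𝒢_p(𝔻)`: `φ(2^k)` is positive, nondecreasing and
`2^{-kd/p} φ(2^k)` is nonincreasing. -/
def Gp (d : ℕ) (p : ℝ) (φ : ℕ → ℝ) : Prop :=
  (∀ k, 0 < φ k) ∧
  ∀ j k : ℕ, j ≤ k → φ j ≤ φ k ∧ φ k ≤ φ j * 2 ^ (((k : ℝ) - j) * d / p)

namespace Aux


lemma two_pow_le {a b : ℕ} (h : (2:ℤ)^a ≤ (2:ℤ)^b) : a ≤ b := by
  have h' : (2:ℕ)^a ≤ 2^b := by exact_mod_cast h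
  exact (Nat.pow_le_pow_iff_right one_lt_two).1 h'

lemma two_pow_lt {a b : ℕ} (h : (2:ℤ)^a < (2:ℤ)^b) : a < b := by
  have h' : (2:ℕ)^a < 2^b := by exact_mod_cast h
  exact (Nat.pow_lt_pow_iff_right one_lt_two).1 h'

lemma two_pow_inj {a b : ℕ} (h : (2:ℤ)^a = (2:ℤ)^b) : a = b := by
  have h' : (2:ℕ)^a = 2^b := by exact_mod_cast h
  exact Nat.pow_right_injective le_rfl h'

/-- the lattice point `(2^J - 1, 0, ..., 0)` -/
def pt (d : ℕ) (hd : 0 < d) (J : ℕ) : Fin d → ℤ :=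
  fun i => if i = ⟨0, hd⟩ then 2^J - 1 else 0

lemma pt_inj (d : ℕ) (hd : 0 < d) : Function.Injective (pt d hd) := by
  intro a b h
  have h0 := congrFun h ⟨0, hd⟩
  simp only [pt, if_true, eq_self_iff_true] at h0
  exact two_pow_inj (by omega)

/-- uniqueness of the point in a cube with `m i₀ ≠ 0`. -/
lemma uniq {d : ℕ} (hd : 0 < d) {j : ℕ} {m : Fin d → ℤ} (hm0 : m ⟨0, hd⟩ ≠ 0)
    {J J' : ℕ} (h : inCube d j m (pt d hd J)) (h' : inCube d j m (pt d hd J')) : J = J' := by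
  set i0 : Fin d := ⟨0, hd⟩
  have key : ∀ K : ℕ, inCube d j m (pt d hd K) → j < K ∧ (2:ℤ)^(K - j) = m i0 + 1 := by
    intro K hK
    have hK0 := hK i0
    simp only [pt, if_true, eq_self_iff_true] at hK0
    obtain ⟨h1, h2⟩ := hK0
    have hej : (0:ℤ) < 2^j := by positivity
    have hKpos : (1:ℤ) ≤ 2^K := one_le_pow₀ (by norm_num)
    have hm1 : 1 ≤ m i0 := by
      rcases lt_or_ge (m i0) 0 with hc|hc
      · exfalso
        have : (2:ℤ)^j * (m i0 + 1) ≤ 0 :=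
          mul_nonpos_of_nonneg_of_nonpos hej.le (by omega)
        omega
      · omega
    have hjK : j < K := by
      have h3 : (2:ℤ)^j ≤ 2^j * m i0 := le_mul_of_one_le_right hej.le hm1
      exact two_pow_lt (by omega)
    have hsplit : (2:ℤ)^K = 2^j * 2^(K - j) := by
      rw [← pow_add]; congr 1; omega
    have h1' : (2:ℤ)^j * m i0 < 2^K := by omega
    have h2' : (2:ℤ)^K ≤ 2^j * (m i0 + 1) := by omega
    rw [hsplit] at h1' h2'
    have hlt : m i0 < 2^(K - j) := lt_of_mul_lt_mul_left h1' hej.le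
    have hle : (2:ℤ)^(K-j) ≤ m i0 + 1 := le_of_mul_le_mul_left h2' hej
    exact ⟨hjK, by omega⟩
  obtain ⟨hj1, he1⟩ := key J h
  obtain ⟨hj2, he2⟩ := key J' h'
  have := two_pow_inj (he1.trans he2.symm)
  omega

/-- combinatorial key lemma: the indices `n` with `x_n` in the cube `Q_{-j,m}`
lie in a controlled finite set. -/
lemma key {d : ℕ} (hd : 0 < d) {jseq : ℕ → ℕ} (hmono : StrictMono jseq)
    (j : ℕ) (m : Fin d → ℤ) :
    ∃ s : Finset ℕ, (∀ n, inCube d j m (pt d hd (jseq n)) → n ∈ s) ∧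
      (s.card ≤ 1 ∨ ∃ n0, jseq n0 ≤ j ∧ s.card ≤ n0 + 1) := by
  classical
  set i0 : Fin d := ⟨0, hd⟩
  by_cases hm : m i0 = 0
  · -- cube containing the origin in the first coordinate
    refine ⟨(Finset.range (j+1)).filter (fun n => jseq n ≤ j), ?_, ?_⟩
    · intro n hn
      have h0 := hn i0
      simp only [pt, if_true, eq_self_iff_true, hm, mul_zero, zero_add, mul_one] at h0
      have hle : jseq n ≤ j := two_pow_le (by omega)
      have : n ≤ jseq n := hmono.le_apply
      simp only [Finset.mem_filter, Finset.mem_range]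
      exact ⟨by omega, hle⟩
    · set s := (Finset.range (j+1)).filter (fun n => jseq n ≤ j) with hs
      rcases s.eq_empty_or_nonempty with he|hne
      · exact Or.inl (by simp [he])
      · refine Or.inr ⟨s.max' hne, ?_, ?_⟩
        · have := s.max'_mem hne
          simp only [hs, Finset.mem_filter] at this
          exact this.2
        · have hsub : s ⊆ Finset.range (s.max' hne + 1) := by
            intro k hk
            simp only [Finset.mem_range]
            exact Nat.lt_succ_of_le (s.le_max' k hk)
          calc s.card ≤ (Finset.range (s.max' hne + 1)).card := Finset.card_le_card hsub
            _ = s.max' hne + 1 := Finset.card_range _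
  · -- at most one point
    by_cases hex : ∃ n, inCube d j m (pt d hd (jseq n))
    · obtain ⟨n₁, hn₁⟩ := hex
      refine ⟨{n₁}, ?_, Or.inl (by simp)⟩
      intro n hn
      simp only [Finset.mem_singleton]
      exact hmono.injective (uniq hd hm hn hn₁)
    · exact ⟨∅, fun n hn => absurd ⟨n, hn⟩ hex, Or.inl (by simp)⟩




open Classical in
/-- the embedding `ℓ_∞(ℕ) → sequences on ℤ^d`. -/
def Tmap (d : ℕ) (hd : 0 < d) (jseq : ℕ → ℕ) (μ : ℕ → ℂ) : (Fin d → ℤ) → ℂ :=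
  fun k => if h : ∃ n, pt d hd (jseq n) = k then μ h.choose else 0

lemma Tmap_pt {d : ℕ} (hd : 0 < d) {jseq : ℕ → ℕ} (hmono : StrictMono jseq)
    (μ : ℕ → ℂ) (n : ℕ) : Tmap d hd jseq μ (pt d hd (jseq n)) = μ n := by
  have h : ∃ n', pt d hd (jseq n') = pt d hd (jseq n) := ⟨n, rfl⟩
  simp only [Tmap, dif_pos h]
  congr 1
  exact hmono.injective (pt_inj d hd h.choose_spec)

lemma Tmap_eq_zero {d : ℕ} (hd : 0 < d) {jseq : ℕ → ℕ} {μ : ℕ → ℂ}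
    {k : Fin d → ℤ} (h : ∀ n, pt d hd (jseq n) ≠ k) : Tmap d hd jseq μ k = 0 := by
  simp only [Tmap, dif_neg (not_exists.mpr h)]

lemma Tmap_add (d : ℕ) (hd : 0 < d) (jseq : ℕ → ℕ) (μ ν : ℕ → ℂ) :
    Tmap d hd jseq (μ + ν) = Tmap d hd jseq μ + Tmap d hd jseq ν := by
  funext k
  simp only [Tmap, Pi.add_apply]
  split <;> simp

lemma Tmap_smul (d : ℕ) (hd : 0 < d) (jseq : ℕ → ℕ) (c : ℂ) (μ : ℕ → ℂ) :
    Tmap d hd jseq (c • μ) = c • Tmap d hd jseq μ := by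
  funext k
  simp only [Tmap, Pi.smul_apply]
  split <;> simp

lemma Tmap_inj {d : ℕ} (hd : 0 < d) {jseq : ℕ → ℕ} (hmono : StrictMono jseq) :
    Function.Injective (Tmap d hd jseq) := by
  intro μ ν h
  funext n
  have := congrFun h (pt d hd (jseq n))
  rwa [Tmap_pt hd hmono, Tmap_pt hd hmono] at this

/-- the scalar bound `φ(2^j) 2^{-jd/p} card^{1/p} ≤ 1`. -/
lemma scalar_bound {d : ℕ} {p : ℝ} (hp : 0 < p) {φ : ℕ → ℝ} (hGp : Gp d p φ)
    (hφ0 : φ 0 = 1) {jseq : ℕ → ℕ}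
    (hcond : ∀ n, φ (jseq n) * (2:ℝ) ^ (-(((jseq n) : ℝ) * d) / p) ≤ ((n:ℝ)+1) ^ (-(1/p)))
    {j c : ℕ} (hc : c ≤ 1 ∨ ∃ n0, jseq n0 ≤ j ∧ c ≤ n0 + 1) :
    φ j * (2:ℝ) ^ (-((j:ℝ) * d) / p) * (c:ℝ) ^ (1/p) ≤ 1 := by
  have h2 : ∀ r : ℝ, (0:ℝ) < (2:ℝ) ^ r := fun r => Real.rpow_pos_of_pos two_pos r
  have hφpos := hGp.1
  rcases hc with hc | ⟨n0, hn0, hcard⟩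
  · interval_cases c
    · rw [Nat.cast_zero, Real.zero_rpow (by positivity : (1:ℝ)/p ≠ 0), mul_zero]
      norm_num
    · have hb := (hGp.2 0 j (Nat.zero_le j)).2
      rw [hφ0, one_mul] at hb
      push_cast at hb
      have : φ j * (2:ℝ) ^ (-((j:ℝ) * d) / p) ≤ 1 := by
        calc φ j * (2:ℝ) ^ (-((j:ℝ) * d) / p)
            ≤ (2:ℝ) ^ (((j:ℝ) - 0) * d / p) * (2:ℝ) ^ (-((j:ℝ) * d) / p) :=
              mul_le_mul_of_nonneg_right hb (h2 _).le
          _ = (2:ℝ) ^ (((j:ℝ) - 0) * d / p + -((j:ℝ) * d) / p) := (Real.rpow_add two_pos _ _).symm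
          _ = (2:ℝ) ^ (0:ℝ) := by ring_nf; simp
          _ = 1 := Real.rpow_zero 2
      simpa using this
  · have hmain : φ j * (2:ℝ) ^ (-((j:ℝ) * d) / p)
        ≤ φ (jseq n0) * (2:ℝ) ^ (-(((jseq n0):ℝ) * d) / p) := by
      have hb := (hGp.2 (jseq n0) j hn0).2
      calc φ j * (2:ℝ) ^ (-((j:ℝ) * d) / p)
          ≤ (φ (jseq n0) * (2:ℝ) ^ (((j:ℝ) - (jseq n0)) * d / p)) * (2:ℝ) ^ (-((j:ℝ) * d) / p) :=
            mul_le_mul_of_nonneg_right hb (h2 _).le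
        _ = φ (jseq n0) * ((2:ℝ) ^ (((j:ℝ) - (jseq n0)) * d / p) * (2:ℝ) ^ (-((j:ℝ) * d) / p)) := by
            ring
        _ = φ (jseq n0) * (2:ℝ) ^ (((j:ℝ) - (jseq n0)) * d / p + -((j:ℝ) * d) / p) := by
            rw [Real.rpow_add two_pos]
        _ = φ (jseq n0) * (2:ℝ) ^ (-(((jseq n0):ℝ) * d) / p) := by ring_nf
    have hA := hmain.trans (hcond n0)
    have hcc : (c:ℝ) ^ (1/p) ≤ ((n0:ℝ)+1) ^ (1/p) := by
      apply Real.rpow_le_rpow (by positivity) _ (by positivity)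
      exact_mod_cast hcard
    calc φ j * (2:ℝ) ^ (-((j:ℝ) * d) / p) * (c:ℝ) ^ (1/p)
        ≤ ((n0:ℝ)+1) ^ (-(1/p)) * ((n0:ℝ)+1) ^ (1/p) := by
          apply mul_le_mul hA hcc (by positivity)
          positivity
      _ = ((n0:ℝ)+1) ^ (-(1/p) + 1/p) := (Real.rpow_add (by positivity) _ _).symm
      _ = 1 := by rw [neg_add_cancel, Real.rpow_zero]


lemma mNorm_Tmap {d : ℕ} (hd : 0 < d) {p : ℝ} (hp : 0 < p) {φ : ℕ → ℝ}
    (hGp : Gp d p φ) (hφ0 : φ 0 = 1) {jseq : ℕ → ℕ} (hmono : StrictMono jseq)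
    (hcond : ∀ n, φ (jseq n) * (2:ℝ) ^ (-(((jseq n):ℝ) * d) / p) ≤ ((n:ℝ)+1) ^ (-(1/p)))
    (μ : ℕ → ℂ) :
    mNorm d p φ (Tmap d hd jseq μ) = ⨆ n, ENNReal.ofReal ‖μ n‖ := by
  set M := ⨆ n, ENNReal.ofReal ‖μ n‖ with hM
  have hcast : ∀ c : ℕ, ((c:ℝ≥0∞))^(1/p) = ENNReal.ofReal ((c:ℝ)^(1/p)) := by
    intro c
    rcases Nat.eq_zero_or_pos c with rfl|hc
    · rw [Nat.cast_zero, Nat.cast_zero, ENNReal.zero_rpow_of_pos (by positivity),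
        Real.zero_rpow (by positivity), ENNReal.ofReal_zero]
    · rw [← ENNReal.ofReal_natCast, ENNReal.ofReal_rpow_of_pos (by exact_mod_cast hc)]
  have h2cast : ∀ e : ℝ, (2:ℝ≥0∞)^e = ENNReal.ofReal ((2:ℝ)^e) := by
    intro e
    rw [show (2:ℝ≥0∞) = ENNReal.ofReal 2 by norm_num, ENNReal.ofReal_rpow_of_pos two_pos]
  apply le_antisymm
  · rw [mNorm]
    apply iSup_le; intro j; apply iSup_le; intro m
    obtain ⟨s, hs, hsc⟩ := key hd hmono j m
    have hts : (∑' k : {k : Fin d → ℤ // inCube d j m k},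
        ENNReal.ofReal ‖Tmap d hd jseq μ k.1‖ ^ p)
        = ∑' n : {n : ℕ // inCube d j m (pt d hd (jseq n))},
          ENNReal.ofReal ‖μ n.1‖ ^ p := by
      apply tsum_eq_tsum_of_ne_zero_bij
        (i := fun x => ⟨pt d hd (jseq x.1.1), x.1.2⟩)
      · intro x y hxy
        have hv := congrArg Subtype.val hxy
        exact Subtype.ext (Subtype.ext (hmono.injective (pt_inj d hd hv)))
      · rintro ⟨k, hk⟩ hfk
        rw [Function.mem_support] at hfk
        have hTk : Tmap d hd jseq μ k ≠ 0 := by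
          intro h0
          apply hfk
          rw [h0, norm_zero, ENNReal.ofReal_zero, ENNReal.zero_rpow_of_pos hp]
        have hex : ∃ n, pt d hd (jseq n) = k := by
          by_contra hne
          push_neg at hne
          exact hTk (Tmap_eq_zero hd hne)
        obtain ⟨n, hn⟩ := hex
        have hPn : inCube d j m (pt d hd (jseq n)) := by rw [hn]; exact hk
        have hμn : μ n ≠ 0 := by
          rw [← Tmap_pt hd hmono μ n, hn]; exact hTk
        refine ⟨⟨⟨n, hPn⟩, ?_⟩, Subtype.ext hn⟩
        rw [Function.mem_support]
        exact ne_of_gt (ENNReal.rpow_pos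
          (ENNReal.ofReal_pos.mpr (norm_pos_iff.mpr hμn)) ENNReal.ofReal_ne_top)
      · rintro ⟨⟨n, hn⟩, hgn⟩
        simp only
        rw [Tmap_pt hd hmono]
    have hle2 : (∑' n : {n : ℕ // inCube d j m (pt d hd (jseq n))},
        ENNReal.ofReal ‖μ n.1‖ ^ p) ≤ (s.card : ℝ≥0∞) * M ^ p := by
      rw [ENNReal.tsum_eq_iSup_sum]
      apply iSup_le; intro t
      have hcard : t.card ≤ s.card := by
        have h1 : (t.image Subtype.val).card = t.card :=
          Finset.card_image_of_injective t Subtype.val_injective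
        rw [← h1]
        apply Finset.card_le_card
        intro x hx
        obtain ⟨a, _, rfl⟩ := Finset.mem_image.mp hx
        exact hs a.1 a.2
      calc ∑ x ∈ t, ENNReal.ofReal ‖μ x.1‖ ^ p
          ≤ ∑ _x ∈ t, M ^ p := Finset.sum_le_sum (fun x _ =>
            ENNReal.rpow_le_rpow (le_iSup (fun n => ENNReal.ofReal ‖μ n‖) x.1) hp.le)
        _ = t.card * M ^ p := by rw [Finset.sum_const, nsmul_eq_mul]
        _ ≤ s.card * M ^ p := mul_le_mul_left (by exact_mod_cast hcard) _
    have hloc : localSum d p j m (Tmap d hd jseq μ) ≤ (s.card : ℝ≥0∞) ^ (1/p) * M := by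
      rw [localSum, hts]
      calc (∑' n : {n : ℕ // inCube d j m (pt d hd (jseq n))},
            ENNReal.ofReal ‖μ n.1‖ ^ p) ^ (1/p)
          ≤ ((s.card : ℝ≥0∞) * M ^ p) ^ (1/p) := ENNReal.rpow_le_rpow hle2 (by positivity)
        _ = (s.card : ℝ≥0∞) ^ (1/p) * (M ^ p) ^ (1/p) :=
            ENNReal.mul_rpow_of_nonneg _ _ (by positivity)
        _ = (s.card : ℝ≥0∞) ^ (1/p) * M := by
            rw [← ENNReal.rpow_mul, mul_one_div_cancel hp.ne', ENNReal.rpow_one]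
    calc ENNReal.ofReal (φ j) * (2:ℝ≥0∞) ^ (-((j:ℝ) * d) / p) * localSum d p j m (Tmap d hd jseq μ)
        ≤ ENNReal.ofReal (φ j) * (2:ℝ≥0∞) ^ (-((j:ℝ) * d) / p) *
          ((s.card : ℝ≥0∞) ^ (1/p) * M) := mul_le_mul_right hloc _
      _ = (ENNReal.ofReal (φ j) * (2:ℝ≥0∞) ^ (-((j:ℝ) * d) / p) *
          (s.card : ℝ≥0∞) ^ (1/p)) * M := by ring
      _ ≤ 1 * M := by
          apply mul_le_mul_left
          rw [hcast, h2cast, ← ENNReal.ofReal_mul (hGp.1 j).le,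
            ← ENNReal.ofReal_mul (mul_nonneg (hGp.1 j).le (Real.rpow_pos_of_pos two_pos _).le)]
          calc ENNReal.ofReal (φ j * (2:ℝ) ^ (-((j:ℝ) * d) / p) * (s.card:ℝ) ^ (1/p))
              ≤ ENNReal.ofReal 1 :=
                ENNReal.ofReal_le_ofReal (scalar_bound hp hGp hφ0 hcond hsc)
            _ = 1 := ENNReal.ofReal_one
      _ = M := one_mul M
  · apply iSup_le; intro n
    have hcube : inCube d 0 (pt d hd (jseq n)) (pt d hd (jseq n)) := by
      intro i
      simp only [pow_zero, one_mul]
      omega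
    rw [mNorm]
    apply le_iSup_of_le 0
    apply le_iSup_of_le (pt d hd (jseq n))
    rw [hφ0]
    simp only [ENNReal.ofReal_one, one_mul, Nat.cast_zero, zero_mul, neg_zero, zero_div,
      ENNReal.rpow_zero]
    rw [localSum]
    have hterm : ENNReal.ofReal ‖μ n‖ ^ p ≤
        ∑' k : {k : Fin d → ℤ // inCube d 0 (pt d hd (jseq n)) k},
          ENNReal.ofReal ‖Tmap d hd jseq μ k.1‖ ^ p := by
      have h := ENNReal.le_tsum
        (f := fun k : {k : Fin d → ℤ // inCube d 0 (pt d hd (jseq n)) k} =>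
          ENNReal.ofReal ‖Tmap d hd jseq μ k.1‖ ^ p) ⟨pt d hd (jseq n), hcube⟩
      rwa [Tmap_pt hd hmono] at h
    calc ENNReal.ofReal ‖μ n‖ = (ENNReal.ofReal ‖μ n‖ ^ p) ^ (1/p) := by
          rw [← ENNReal.rpow_mul, mul_one_div_cancel hp.ne', ENNReal.rpow_one]
      _ ≤ (∑' k : {k : Fin d → ℤ // inCube d 0 (pt d hd (jseq n)) k},
          ENNReal.ofReal ‖Tmap d hd jseq μ k.1‖ ^ p) ^ (1/p) :=
          ENNReal.rpow_le_rpow hterm (by positivity)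

end Aux

theorem stmt_19 (d : ℕ) (hd : 0 < d) (p₁ p₂ : ℝ) (hp₁ : 0 < p₁) (hp₂ : 0 < p₂)
    (φ₁ φ₂ : ℕ → ℝ) (hGp₁ : Gp d p₁ φ₁) (hGp₂ : Gp d p₂ φ₂)
    (hφ₁1 : φ₁ 0 = 1) (hφ₂1 : φ₂ 0 = 1)
    (hunb₁ : ∀ C : ℝ, ∃ k, C < φ₁ k) (hunb₂ : ∀ C : ℝ, ∃ k, C < φ₂ k)
    (hlim₁ : Tendsto (fun k : ℕ => φ₁ k * (2 : ℝ) ^ (-((k : ℝ) * d) / p₁))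
      atTop (nhds 0))
    (hlim₂ : Tendsto (fun k : ℕ => φ₂ k * (2 : ℝ) ^ (-((k : ℝ) * d) / p₂))
      atTop (nhds 0))
    (hemb : ∃ C : ℝ≥0∞, C < ⊤ ∧ ∀ lam : (Fin d → ℤ) → ℂ,
      mNorm d p₂ φ₂ lam ≤ C * mNorm d p₁ φ₁ lam) :
    (∃ T : (ℕ → ℂ) → ((Fin d → ℤ) → ℂ), IsLinearMap ℂ T ∧
      Function.Injective T ∧
      ∀ μ : ℕ → ℂ,
        mNorm d p₁ φ₁ (T μ) = (⨆ n : ℕ, ENNReal.ofReal ‖μ n‖) ∧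
        mNorm d p₂ φ₂ (T μ) = (⨆ n : ℕ, ENNReal.ofReal ‖μ n‖)) ∧
    ¬ (∀ X : Submodule ℂ ((Fin d → ℤ) → ℂ),
        (∀ x ∈ X, mNorm d p₁ φ₁ x < ⊤) → ¬ Module.Finite ℂ X →
        ∀ ε : ℝ≥0∞, 0 < ε →
          ∃ x ∈ X, mNorm d p₁ φ₁ x = 1 ∧ mNorm d p₂ φ₂ x < ε) := by
  classical
  -- choose the sequence of scales
  have hA : ∀ n : ℕ, ∀ᶠ k in atTop,
      φ₁ k * (2:ℝ)^(-((k:ℝ)*d)/p₁) ≤ ((n:ℝ)+1)^(-(1/p₁)) ∧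
      φ₂ k * (2:ℝ)^(-((k:ℝ)*d)/p₂) ≤ ((n:ℝ)+1)^(-(1/p₂)) := by
    intro n
    have h1 := hlim₁.eventually_lt_const
      (show (0:ℝ) < ((n:ℝ)+1)^(-(1/p₁)) by positivity)
    have h2 := hlim₂.eventually_lt_const
      (show (0:ℝ) < ((n:ℝ)+1)^(-(1/p₂)) by positivity)
    filter_upwards [h1, h2] with k hk1 hk2
    exact ⟨hk1.le, hk2.le⟩
  have hA' : ∀ n : ℕ, ∃ K, ∀ k, k ≥ K →
      φ₁ k * (2:ℝ)^(-((k:ℝ)*d)/p₁) ≤ ((n:ℝ)+1)^(-(1/p₁)) ∧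
      φ₂ k * (2:ℝ)^(-((k:ℝ)*d)/p₂) ≤ ((n:ℝ)+1)^(-(1/p₂)) :=
    fun n => eventually_atTop.mp (hA n)
  choose K hK using hA'
  set jseq : ℕ → ℕ := fun n => Nat.rec (K 0) (fun n ih => max (K (n+1)) (ih+1)) n with hjseq
  have hmono : StrictMono jseq := strictMono_nat_of_lt_succ (fun n =>
    lt_of_lt_of_le (Nat.lt_succ_self _) (le_max_right _ _))
  have hge : ∀ n, K n ≤ jseq n := by
    intro n
    cases n with
    | zero => exact le_rfl
    | succ n => exact le_max_left _ _
  have hcond₁ : ∀ n, φ₁ (jseq n) * (2:ℝ)^(-(((jseq n):ℝ)*d)/p₁) ≤ ((n:ℝ)+1)^(-(1/p₁)) :=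
    fun n => (hK n (jseq n) (hge n)).1
  have hcond₂ : ∀ n, φ₂ (jseq n) * (2:ℝ)^(-(((jseq n):ℝ)*d)/p₂) ≤ ((n:ℝ)+1)^(-(1/p₂)) :=
    fun n => (hK n (jseq n) (hge n)).2
  set T := Aux.Tmap d hd jseq with hT
  have hTlin : IsLinearMap ℂ T := ⟨Aux.Tmap_add d hd jseq, Aux.Tmap_smul d hd jseq⟩
  have hTinj : Function.Injective T := Aux.Tmap_inj hd hmono
  have hnorm₁ : ∀ μ : ℕ → ℂ, mNorm d p₁ φ₁ (T μ) = ⨆ n, ENNReal.ofReal ‖μ n‖ :=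
    fun μ => Aux.mNorm_Tmap hd hp₁ hGp₁ hφ₁1 hmono hcond₁ μ
  have hnorm₂ : ∀ μ : ℕ → ℂ, mNorm d p₂ φ₂ (T μ) = ⨆ n, ENNReal.ofReal ‖μ n‖ :=
    fun μ => Aux.mNorm_Tmap hd hp₂ hGp₂ hφ₂1 hmono hcond₂ μ
  refine ⟨⟨T, hTlin, hTinj, fun μ => ⟨hnorm₁ μ, hnorm₂ μ⟩⟩, ?_⟩
  intro hcontra
  set Tl : (ℕ → ℂ) →ₗ[ℂ] ((Fin d → ℤ) → ℂ) := IsLinearMap.mk' T hTlin with hTl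
  set F := Submodule.span ℂ (Set.range fun n : ℕ => (Pi.single n 1 : ℕ → ℂ)) with hF
  set X := F.map Tl with hX
  have hbdd : ∀ μ ∈ F, ∃ C : ℝ, ∀ n, ‖μ n‖ ≤ C := by
    intro μ hμ
    induction hμ using Submodule.span_induction with
    | mem x hx =>
      obtain ⟨n, rfl⟩ := hx
      refine ⟨1, fun m => ?_⟩
      rcases eq_or_ne m n with rfl | h
      · simp
      · simp [Pi.single_eq_of_ne h]
    | zero => exact ⟨0, fun n => by simp⟩
    | add x y hx hy ihx ihy =>
      obtain ⟨C, hC⟩ := ihx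
      obtain ⟨D, hD⟩ := ihy
      refine ⟨C + D, fun n => ?_⟩
      rw [Pi.add_apply]
      exact (norm_add_le _ _).trans (add_le_add (hC n) (hD n))
    | smul a x hx ihx =>
      obtain ⟨C, hC⟩ := ihx
      refine ⟨‖a‖ * C, fun n => ?_⟩
      rw [Pi.smul_apply, norm_smul]
      exact mul_le_mul_of_nonneg_left (hC n) (norm_nonneg a)
  have h1 : ∀ x ∈ X, mNorm d p₁ φ₁ x < ⊤ := by
    rintro x hx
    obtain ⟨μ, hμF, rfl⟩ := Submodule.mem_map.mp hx
    obtain ⟨C, hC⟩ := hbdd μ hμF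
    have hTlμ : Tl μ = T μ := rfl
    rw [hTlμ, hnorm₁]
    calc ⨆ n, ENNReal.ofReal ‖μ n‖ ≤ ENNReal.ofReal C :=
        iSup_le fun n => ENNReal.ofReal_le_ofReal (hC n)
      _ < ⊤ := ENNReal.ofReal_lt_top
  have h2 : ¬ Module.Finite ℂ X := by
    intro hfin
    have hsingle : LinearIndependent ℂ (fun n : ℕ => (Pi.single n 1 : ℕ → ℂ)) := by
      rw [linearIndependent_iff']
      intro t g hsum n hn
      have h := congrFun hsum n
      rw [Finset.sum_apply] at h
      simp only [Pi.smul_apply, Pi.single_apply, smul_eq_mul, mul_ite, mul_one, mul_zero,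
        Pi.zero_apply] at h
      rw [Finset.sum_ite_eq t n g, if_pos hn] at h
      exact h
    have hker : LinearMap.ker Tl = ⊥ := LinearMap.ker_eq_bot.mpr hTinj
    have hTlind : LinearIndependent ℂ (⇑Tl ∘ fun n : ℕ => (Pi.single n 1 : ℕ → ℂ)) :=
      hsingle.map' Tl hker
    have hv : LinearIndependent ℂ (fun n : ℕ =>
        (⟨Tl (Pi.single n 1), Submodule.mem_map_of_mem
          (Submodule.subset_span ⟨n, rfl⟩)⟩ : X)) :=
      LinearIndependent.of_comp X.subtype hTlind
    haveI := hfin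
    haveI := hv.finite
    exact not_finite ℕ
  obtain ⟨x, hxX, hx1, hx2⟩ := hcontra X h1 h2 1 zero_lt_one
  obtain ⟨μ, hμF, rfl⟩ := Submodule.mem_map.mp hxX
  have hTlμ : Tl μ = T μ := rfl
  rw [hTlμ, hnorm₁] at hx1
  rw [hTlμ, hnorm₂, hx1] at hx2
  exact lt_irrefl 1 hx2

end
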